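/- Let {a_I : I ∈ 𝒟⁺} be independent random variables, uniformly subgaussian with variance factor ν, with Σ_I E|a_I| < ∞, and let h_I be the Haar system on ℝ⁺. Then the random kernel K(x,y;ω) = Σ_I a_I(ω) h_I(x) h_I(y) satisfies ‖K(x,y;·)‖_{L²(Ω,P)} ≤ B/δ(x,y) for all x ≠ y in ℝ⁺ and some constant B depending only on ν and Σ_I E|a_I|. -/

import Mathlib

open MeasureTheory ProbabilityTheory Real
open scoped ENNReal NNReal

/-- The Haar mother wavelet `h = 1_{[0,1/2)} - 1_{[1/2,1)}`. -/
noncomputable def haarFun (t : ℝ) : ℝ :=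
  if 0 ≤ t ∧ t < 1 / 2 then 1 else if 1 / 2 ≤ t ∧ t < 1 then -1 else 0

/-- The Haar wavelet `h_I(x) = |I|^{-1/2} h((x - inf I)/|I|) = 2^{j/2} h(2^j x - k)`
associated to the dyadic interval `I = [k 2^{-j}, (k+1) 2^{-j}) ⊆ ℝ⁺`. -/
noncomputable def haarDyadic (j : ℤ) (k : ℕ) (x : ℝ) : ℝ :=
  (2 : ℝ) ^ ((j : ℝ) / 2) * haarFun ((2 : ℝ) ^ j * x - k)

/-- The dyadic interval `I^j_k = [k 2^{-j}, (k+1) 2^{-j}) ⊆ ℝ⁺`. -/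
noncomputable def dyadicInterval (j : ℤ) (k : ℕ) : Set ℝ :=
  Set.Ico ((k : ℝ) * (2 : ℝ) ^ (-j)) (((k : ℝ) + 1) * (2 : ℝ) ^ (-j))

/-- The dyadic distance on `ℝ⁺`: `δ(x,y) = inf {|I| : I ∈ 𝒟⁺, x ∈ I, y ∈ I}`. -/
noncomputable def dyadicDist (x y : ℝ) : ℝ :=
  sInf {r : ℝ | ∃ (j : ℤ) (k : ℕ), r = (2 : ℝ) ^ (-j)
    ∧ x ∈ dyadicInterval j k ∧ y ∈ dyadicInterval j k}

/- ### Auxiliary lemmas -/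

lemma RHK.ennnorm_tsum_le {ι : Type*} (u : ι → ℝ) :
    (‖∑' i, u i‖₊ : ℝ≥0∞) ≤ ∑' i, (‖u i‖₊ : ℝ≥0∞) := by
  by_cases h : Summable fun i => ‖u i‖₊
  · rw [← ENNReal.coe_tsum h]
    exact ENNReal.coe_le_coe.2 (nnnorm_tsum_le h)
  · have := (ENNReal.tsum_coe_ne_top_iff_summable (f := fun i => ‖u i‖₊)).not.mpr h
    simp only [not_not, ne_eq] at this
    simp [this]

lemma RHK.mem_dyadicInterval_iff {j : ℤ} {k : ℕ} {x : ℝ} :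
    x ∈ dyadicInterval j k ↔ 0 ≤ (2:ℝ)^j * x - (k:ℝ) ∧ (2:ℝ)^j * x - (k:ℝ) < 1 := by
  have hc : (0:ℝ) < (2:ℝ)^j := zpow_pos (by norm_num) j
  have he : (2:ℝ)^j * (2:ℝ)^(-j) = 1 := by
    rw [← zpow_add₀ (by norm_num : (2:ℝ) ≠ 0)]; simp
  simp only [dyadicInterval, Set.mem_Ico]
  constructor
  · rintro ⟨h1, h2⟩
    constructor
    · nlinarith [mul_le_mul_of_nonneg_left h1 hc.le]
    · nlinarith [mul_lt_mul_of_pos_left h2 hc]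
  · rintro ⟨h1, h2⟩
    have hcinv : (0:ℝ) < (2:ℝ)^(-j) := zpow_pos (by norm_num) (-j)
    constructor
    · nlinarith [mul_le_mul_of_nonneg_left h1 hcinv.le]
    · nlinarith [mul_lt_mul_of_pos_left h2 hcinv]

lemma RHK.haarDyadic_eq_zero {j : ℤ} {k : ℕ} {x : ℝ} (h : x ∉ dyadicInterval j k) :
    haarDyadic j k x = 0 := by
  rw [RHK.mem_dyadicInterval_iff] at h
  push_neg at h
  have : haarFun ((2:ℝ)^j * x - k) = 0 := by
    unfold haarFun
    split_ifs with h1 h2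
    · linarith [h h1.1, h1.2]
    · linarith [h (by linarith [h2.1]), h2.2]
    · rfl
  rw [haarDyadic, this, mul_zero]

lemma RHK.abs_haarFun_le (t : ℝ) : |haarFun t| ≤ 1 := by
  unfold haarFun; split_ifs <;> norm_num

open scoped Classical in
lemma RHK.haar_term_bound {j : ℤ} {k : ℕ} (x y : ℝ) :
    (‖haarDyadic j k x‖₊ : ℝ≥0∞) * (‖haarDyadic j k y‖₊ : ℝ≥0∞) ≤
      if x ∈ dyadicInterval j k ∧ y ∈ dyadicInterval j k
      then ENNReal.ofReal ((2:ℝ)^j) else 0 := by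
  by_cases h : x ∈ dyadicInterval j k ∧ y ∈ dyadicInterval j k
  · rw [if_pos h]
    have hb : ∀ z : ℝ, (‖haarDyadic j k z‖₊ : ℝ≥0∞) ≤
        ENNReal.ofReal ((2:ℝ) ^ ((j:ℝ)/2)) := by
      intro z
      rw [← enorm_eq_nnnorm, Real.enorm_eq_ofReal_abs]
      apply ENNReal.ofReal_le_ofReal
      rw [haarDyadic, abs_mul, abs_of_pos (rpow_pos_of_pos two_pos _)]
      calc (2:ℝ) ^ ((j:ℝ)/2) * |haarFun ((2:ℝ)^j * z - k)|
          ≤ (2:ℝ) ^ ((j:ℝ)/2) * 1 :=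
            mul_le_mul_of_nonneg_left (RHK.abs_haarFun_le _) (rpow_pos_of_pos two_pos _).le
        _ = (2:ℝ) ^ ((j:ℝ)/2) := mul_one _
    calc (‖haarDyadic j k x‖₊ : ℝ≥0∞) * (‖haarDyadic j k y‖₊ : ℝ≥0∞)
        ≤ ENNReal.ofReal ((2:ℝ) ^ ((j:ℝ)/2)) * ENNReal.ofReal ((2:ℝ) ^ ((j:ℝ)/2)) :=
          mul_le_mul' (hb x) (hb y)
      _ = ENNReal.ofReal ((2:ℝ) ^ ((j:ℝ)/2) * (2:ℝ) ^ ((j:ℝ)/2)) :=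
          (ENNReal.ofReal_mul (rpow_pos_of_pos two_pos _).le).symm
      _ = ENNReal.ofReal ((2:ℝ)^j) := by
          rw [← Real.rpow_add two_pos, show (j:ℝ)/2 + (j:ℝ)/2 = (j:ℝ) by ring,
            Real.rpow_intCast]
  · rw [if_neg h]
    rcases not_and_or.1 h with h' | h' <;> simp [RHK.haarDyadic_eq_zero h']

lemma RHK.dyadicDist_pos {x y : ℝ} (hx : 0 ≤ x) (hy : 0 ≤ y) (hxy : x ≠ y) :
    0 < dyadicDist x y := by
  have hlb : ∀ r ∈ {r : ℝ | ∃ (j : ℤ) (k : ℕ), r = (2 : ℝ) ^ (-j)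
      ∧ x ∈ dyadicInterval j k ∧ y ∈ dyadicInterval j k}, |x - y| ≤ r := by
    rintro r ⟨j, k, rfl, hxI, hyI⟩
    rcases hxI with ⟨hx1, hx2⟩
    rcases hyI with ⟨hy1, hy2⟩
    rw [abs_sub_le_iff]
    constructor <;> nlinarith
  have hne : ∃ r, r ∈ {r : ℝ | ∃ (j : ℤ) (k : ℕ), r = (2 : ℝ) ^ (-j)
      ∧ x ∈ dyadicInterval j k ∧ y ∈ dyadicInterval j k} := by
    obtain ⟨n, hn⟩ := exists_nat_gt (max x y)
    refine ⟨(2:ℝ)^((n:ℤ)), -(n:ℤ), 0, by rw [neg_neg], ?_, ?_⟩ <;>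
    · constructor
      · simpa using (by assumption : (0:ℝ) ≤ _)
      · rw [neg_neg]
        have h2 : ((n:ℝ)) < (2:ℝ)^((n:ℤ)) := by
          rw [zpow_natCast]
          exact_mod_cast (Nat.lt_two_pow_self (n := n))
        simp only [Nat.cast_zero, zero_add, one_mul]
        calc (_:ℝ) ≤ max x y := by simp
          _ < n := hn
          _ < _ := h2
  calc (0:ℝ) < |x - y| := abs_pos.2 (sub_ne_zero.2 hxy)
    _ ≤ dyadicDist x y := le_csInf ⟨_, hne.choose_spec⟩ hlb

lemma RHK.dyadicDist_le {x y : ℝ} {j : ℤ} {k : ℕ}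
    (hxI : x ∈ dyadicInterval j k) (hyI : y ∈ dyadicInterval j k) :
    dyadicDist x y ≤ (2:ℝ)^(-j) := by
  apply csInf_le
  · refine ⟨0, ?_⟩
    rintro r ⟨j', k', rfl, _, _⟩
    exact (zpow_pos (by norm_num : (0:ℝ) < 2) _).le
  · exact ⟨j, k, rfl, hxI, hyI⟩

lemma RHK.geom_bound (δ : ℝ) (hδ : 0 < δ) :
    ∑' j : ℤ, (if δ ≤ (2:ℝ)^(-j) then ENNReal.ofReal ((2:ℝ)^j) else 0)
      ≤ ENNReal.ofReal (2 / δ) := by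
  classical
  set M : ℤ := ⌊Real.logb 2 δ⁻¹⌋ with hM
  have h2M : (2:ℝ)^M ≤ δ⁻¹ := by
    have h : (2:ℝ)^((M:ℝ)) ≤ (2:ℝ)^(Real.logb 2 δ⁻¹) :=
      Real.rpow_le_rpow_of_exponent_le one_le_two (Int.floor_le _)
    rwa [Real.rpow_logb two_pos (by norm_num) (inv_pos.2 hδ), Real.rpow_intCast] at h
  have hsupp : ∀ j : ℤ, δ ≤ (2:ℝ)^(-j) → j ≤ M := by
    intro j hj
    have hpos : (0:ℝ) < (2:ℝ)^j := zpow_pos (by norm_num) j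
    rw [zpow_neg] at hj
    have h1 : (2:ℝ)^j ≤ δ⁻¹ := by
      have := inv_anti₀ hδ hj
      rwa [inv_inv] at this
    have h2 : (j:ℝ) ≤ Real.logb 2 δ⁻¹ := by
      have := (Real.logb_le_logb (by norm_num : (1:ℝ) < 2) hpos (inv_pos.2 hδ)).mpr h1
      rwa [← Real.rpow_intCast 2 j, Real.logb_rpow (by norm_num) (by norm_num)] at this
    exact Int.le_floor.2 h2
  calc ∑' j : ℤ, (if δ ≤ (2:ℝ)^(-j) then ENNReal.ofReal ((2:ℝ)^j) else 0)
      ≤ ∑' j : ℤ, (if j ≤ M then ENNReal.ofReal ((2:ℝ)^j) else 0) := by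
        apply ENNReal.tsum_le_tsum; intro j
        by_cases hj : δ ≤ (2:ℝ)^(-j)
        · rw [if_pos hj, if_pos (hsupp j hj)]
        · rw [if_neg hj]; exact zero_le
    _ = ∑' n : ℕ, ENNReal.ofReal ((2:ℝ)^(M - (n:ℤ))) := by
        apply tsum_eq_tsum_of_ne_zero_bij (fun n => M - ((n : ℕ) : ℤ))
        · intro n m hnm
          dsimp only at hnm
          have : ((n : ℕ) : ℤ) = ((m : ℕ) : ℤ) := by omega
          exact Subtype.ext (by exact_mod_cast this)
        · intro j hj
          have hjM : j ≤ M := by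
            by_contra hc
            simp only [Function.mem_support, if_neg hc] at hj
            exact hj rfl
          refine ⟨⟨(M - j).toNat, ?_⟩, ?_⟩
          · simp only [Function.mem_support]
            exact (ENNReal.ofReal_pos.2 (zpow_pos (by norm_num) _)).ne'
          · dsimp only
            omega
        · intro n
          rw [if_pos (by omega : M - ((n : ℕ) : ℤ) ≤ M)]
    _ = ∑' n : ℕ, (ENNReal.ofReal ((2:ℝ)^M) * ENNReal.ofReal (((2:ℝ)⁻¹)^(n:ℕ))) := by
        congr 1; funext n
        rw [← ENNReal.ofReal_mul (zpow_pos (by norm_num : (0:ℝ) < 2) M).le]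
        congr 1
        rw [zpow_sub₀ (by norm_num : (2:ℝ) ≠ 0), zpow_natCast, inv_pow]
        rfl
    _ = ENNReal.ofReal ((2:ℝ)^M) * ∑' n : ℕ, ENNReal.ofReal (((2:ℝ)⁻¹)^(n:ℕ)) :=
        ENNReal.tsum_mul_left
    _ = ENNReal.ofReal ((2:ℝ)^M) * ENNReal.ofReal 2 := by
        rw [← ENNReal.ofReal_tsum_of_nonneg (fun n => by positivity)
          (summable_geometric_of_lt_one (by norm_num) (by norm_num)), tsum_geometric_inv_two]
    _ = ENNReal.ofReal ((2:ℝ)^M * 2) := by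
        rw [← ENNReal.ofReal_mul (zpow_pos (by norm_num : (0:ℝ) < 2) M).le]
    _ ≤ ENNReal.ofReal (2 / δ) := by
        apply ENNReal.ofReal_le_ofReal
        rw [div_eq_mul_inv]
        nlinarith

lemma RHK.rpow_two_eq (z : ℝ≥0∞) : z ^ (2:ℝ) = z ^ (2:ℕ) := by
  rw [← ENNReal.rpow_natCast]; norm_num

lemma RHK.tsum_cauchy_schwarz {ι : Type*} [Countable ι] [MeasurableSpace ι]
    [MeasurableSingletonClass ι] (w v : ι → ℝ≥0∞) :
    (∑' p, w p * v p) ^ (2:ℝ) ≤ (∑' p, w p) * (∑' p, w p * v p ^ (2:ℝ)) := by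
  have hpq : Real.HolderConjugate 2 2 := Real.HolderConjugate.two_two
  set u : ι → ℝ≥0∞ := fun p => w p ^ ((1:ℝ)/2) with hu
  have huu : ∀ p, u p * u p = w p := by
    intro p
    show (w p) ^ ((1:ℝ)/2) * (w p) ^ ((1:ℝ)/2) = w p
    rw [← ENNReal.rpow_add_of_nonneg (x := w p) ((1:ℝ)/2) ((1:ℝ)/2)
      (by norm_num) (by norm_num)]
    norm_num
  have hu2 : ∀ p, u p ^ (2:ℝ) = w p := by
    intro p
    show ((w p) ^ ((1:ℝ)/2)) ^ (2:ℝ) = w p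
    rw [← ENNReal.rpow_mul]
    norm_num
  have h := ENNReal.lintegral_mul_le_Lp_mul_Lq (Measure.count : Measure ι) hpq
    (f := u) (g := fun p => u p * v p)
    (measurable_of_countable _).aemeasurable (measurable_of_countable _).aemeasurable
  rw [lintegral_count, lintegral_count, lintegral_count] at h
  have hfg : ∀ p, (u * fun p => u p * v p) p = w p * v p := by
    intro p
    simp only [Pi.mul_apply]
    rw [← mul_assoc, huu]
  simp only [hfg] at h
  have hg2 : ∀ p, (u p * v p) ^ (2:ℝ) = w p * v p ^ (2:ℝ) := by
    intro p
    rw [ENNReal.mul_rpow_of_nonneg _ _ (by norm_num), hu2]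
  simp only [hu2, hg2] at h
  calc (∑' p, w p * v p) ^ (2:ℝ)
      ≤ ((∑' p, w p) ^ (1/(2:ℝ)) * (∑' p, w p * v p ^ (2:ℝ)) ^ (1/(2:ℝ))) ^ (2:ℝ) :=
        ENNReal.rpow_le_rpow h (by norm_num)
    _ = (∑' p, w p) * (∑' p, w p * v p ^ (2:ℝ)) := by
        rw [ENNReal.mul_rpow_of_nonneg _ _ (by norm_num : (0:ℝ) ≤ 2),
          ← ENNReal.rpow_mul, ← ENNReal.rpow_mul]
        norm_num

lemma RHK.single_var_bound {Ω : Type*} [MeasureSpace Ω] [IsProbabilityMeasure (ℙ : Measure Ω)]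
    (f : Ω → ℝ) (ν : ℝ) (hint : Integrable f ℙ)
    (hmgf : ∀ l : ℝ, Integrable (fun ω => exp (l * (f ω - ∫ w, f w ∂ℙ))) ℙ)
    (hsub : ∀ l : ℝ, log (∫ ω, exp (l * (f ω - ∫ w, f w ∂ℙ)) ∂ℙ) ≤ l ^ 2 * ν / 2)
    (S : ℝ) (hS : ∫ ω, |f ω| ∂ℙ ≤ S) :
    eLpNorm f 2 (ℙ : Measure Ω) ≤ ENNReal.ofReal (S + Real.sqrt (8 * exp (ν / 2))) := by
  have sq4 : ∀ t : ℝ, t ^ 2 ≤ 4 * (exp t + exp (-t)) := by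
    intro t
    have h1 : |t| / 2 ≤ exp (|t| / 2) := by
      have := add_one_le_exp (|t| / 2); linarith
    have h2 : t ^ 2 / 4 ≤ exp |t| := by
      have h0 : (0:ℝ) ≤ |t| / 2 := by positivity
      have h := mul_self_le_mul_self h0 h1
      rw [← Real.exp_add, show |t| / 2 + |t| / 2 = |t| by ring] at h
      nlinarith [sq_abs t]
    have h3 : exp |t| ≤ exp t + exp (-t) := by
      rcases abs_cases t with ⟨h, _⟩ | ⟨h, _⟩ <;> rw [h] <;>
        nlinarith [exp_pos t, exp_pos (-t)]
    linarith
  set μ : ℝ := ∫ w, f w ∂ℙ with hμ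
  set g : Ω → ℝ := fun ω => f ω - μ with hg
  have hg_int1 : Integrable (fun ω => exp (g ω)) ℙ := by
    have := hmgf 1; simpa using this
  have hg_int2 : Integrable (fun ω => exp (-g ω)) ℙ := by
    have := hmgf (-1)
    simp only [neg_one_mul, neg_sub] at this
    simpa [hg, neg_sub] using this
  have hexp : ∀ (h : Ω → ℝ), Integrable (fun ω => exp (h ω)) ℙ →
      log (∫ ω, exp (h ω) ∂ℙ) ≤ ν / 2 → ∫ ω, exp (h ω) ∂ℙ ≤ exp (ν / 2) := by
    intro h hI hlog
    have hpos : 0 < ∫ ω, exp (h ω) ∂ℙ := integral_exp_pos hI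
    calc ∫ ω, exp (h ω) ∂ℙ = exp (log (∫ ω, exp (h ω) ∂ℙ)) := (Real.exp_log hpos).symm
      _ ≤ exp (ν / 2) := exp_le_exp.2 hlog
  have hexp1 : ∫ ω, exp (g ω) ∂ℙ ≤ exp (ν / 2) := by
    apply hexp _ hg_int1
    have := hsub 1
    simp only [one_mul, one_pow] at this
    convert this using 2
  have hexp2 : ∫ ω, exp (-g ω) ∂ℙ ≤ exp (ν / 2) := by
    apply hexp _ hg_int2
    have := hsub (-1)
    simp only [neg_one_mul, neg_one_sq] at this
    convert this using 2 <;> ring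
  have hkey : ∫⁻ ω, ((‖g ω‖₊ : ℝ≥0∞)) ^ (2:ℝ) ∂ℙ ≤ ENNReal.ofReal (8 * exp (ν / 2)) := by
    have hpt : ∀ ω, ((‖g ω‖₊ : ℝ≥0∞)) ^ (2:ℝ) = ENNReal.ofReal (g ω ^ 2) := by
      intro ω
      rw [show ((‖g ω‖₊ : ℝ≥0∞)) ^ (2:ℝ) = ((‖g ω‖₊ : ℝ≥0∞)) ^ (2:ℕ) by
        rw [← ENNReal.rpow_natCast]; norm_num]
      rw [← enorm_eq_nnnorm, Real.enorm_eq_ofReal_abs, ← ENNReal.ofReal_pow (abs_nonneg _), sq_abs]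
    calc ∫⁻ ω, ((‖g ω‖₊ : ℝ≥0∞)) ^ (2:ℝ) ∂ℙ
        = ∫⁻ ω, ENNReal.ofReal (g ω ^ 2) ∂ℙ := by simp_rw [hpt]
      _ ≤ ∫⁻ ω, ENNReal.ofReal (4 * (exp (g ω) + exp (-g ω))) ∂ℙ :=
          lintegral_mono fun ω => ENNReal.ofReal_le_ofReal (sq4 (g ω))
      _ = ENNReal.ofReal (∫ ω, 4 * (exp (g ω) + exp (-g ω)) ∂ℙ) := by
          have hInt : Integrable (fun ω => 4 * (exp (g ω) + exp (-g ω))) ℙ := by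
            simpa using ((hg_int1.add hg_int2).const_mul 4)
          rw [ofReal_integral_eq_lintegral_ofReal hInt
            (Filter.Eventually.of_forall fun ω => by positivity)]
      _ ≤ ENNReal.ofReal (8 * exp (ν / 2)) := by
          apply ENNReal.ofReal_le_ofReal
          rw [integral_const_mul, integral_add hg_int1 hg_int2]
          linarith
  have hgLp : eLpNorm g 2 ℙ ≤ ENNReal.ofReal (Real.sqrt (8 * exp (ν / 2))) := by
    rw [eLpNorm_eq_lintegral_rpow_enorm_toReal (by norm_num) (by norm_num)]
    simp only [ENNReal.toReal_ofNat, enorm_eq_nnnorm]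
    calc (∫⁻ ω, ((‖g ω‖₊ : ℝ≥0∞)) ^ (2:ℝ) ∂ℙ) ^ (1 / (2:ℝ))
        ≤ (ENNReal.ofReal (8 * exp (ν / 2))) ^ (1 / (2:ℝ)) :=
          ENNReal.rpow_le_rpow hkey (by norm_num)
      _ = ENNReal.ofReal (Real.sqrt (8 * exp (ν / 2))) := by
          rw [ENNReal.ofReal_rpow_of_nonneg (by positivity) (by norm_num),
            ← Real.sqrt_eq_rpow]
  have hconst : eLpNorm (fun _ : Ω => μ) 2 ℙ ≤ ENNReal.ofReal S := by
    rw [eLpNorm_const μ (by norm_num) (NeZero.ne ℙ)]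
    simp only [measure_univ, ENNReal.one_rpow, mul_one]
    rw [Real.enorm_eq_ofReal_abs]
    apply ENNReal.ofReal_le_ofReal
    calc |μ| ≤ ∫ ω, |f ω| ∂ℙ := by
          simpa [Real.norm_eq_abs] using norm_integral_le_integral_norm (μ := ℙ) f
      _ ≤ S := hS
  have hSnn : 0 ≤ S := le_trans (integral_nonneg fun ω => abs_nonneg _) hS
  have hsplit : eLpNorm f 2 ℙ ≤ eLpNorm g 2 ℙ + eLpNorm (fun _ : Ω => μ) 2 ℙ := by
    have hfeq : f = (fun ω => g ω + μ) := funext fun ω => by simp [hg]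
    nth_rewrite 1 [hfeq]
    exact eLpNorm_add_le (hint.aestronglyMeasurable.sub aestronglyMeasurable_const)
      aestronglyMeasurable_const (by norm_num)
  calc eLpNorm f 2 ℙ ≤ eLpNorm g 2 ℙ + eLpNorm (fun _ : Ω => μ) 2 ℙ := hsplit
    _ ≤ ENNReal.ofReal (Real.sqrt (8 * exp (ν / 2))) + ENNReal.ofReal S :=
        add_le_add hgLp hconst
    _ = ENNReal.ofReal (S + Real.sqrt (8 * exp (ν / 2))) := by
        rw [← ENNReal.ofReal_add (by positivity) hSnn, add_comm]

/-- The random Haar kernel `K(x,y;ω) = Σ_I a_I(ω) h_I(x) h_I(y)` satisfies the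
Calderón–Zygmund size estimate `‖K(x,y;·)‖_{L²(Ω,P)} ≤ B / δ(x,y)` with respect to the
dyadic distance, when the `a_I` are independent, uniformly subgaussian with variance
factor `ν`, and `Σ_I E|a_I| < ∞`. -/
theorem random_haar_kernel_size
    {Ω : Type*} [MeasureSpace Ω] [IsProbabilityMeasure (ℙ : Measure Ω)]
    (a : ℤ × ℕ → Ω → ℝ) (ν : ℝ) (hν : 0 < ν)
    (hind : iIndepFun a ℙ)
    (hint : ∀ I, Integrable (a I) ℙ)
    (habs : Summable (fun I => ∫ ω, |a I ω| ∂ℙ))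
    (hmgf : ∀ I, ∀ l : ℝ,
      Integrable (fun ω => exp (l * (a I ω - ∫ w, a I w ∂ℙ))) ℙ)
    (hsub : ∀ I, ∀ l : ℝ,
      log (∫ ω, exp (l * (a I ω - ∫ w, a I w ∂ℙ)) ∂ℙ) ≤ l ^ 2 * ν / 2) :
    ∃ B : ℝ, 0 < B ∧ ∀ x y : ℝ, 0 ≤ x → 0 ≤ y → x ≠ y →
      eLpNorm (fun ω =>
          ∑' p : ℤ × ℕ, a p ω * haarDyadic p.1 p.2 x * haarDyadic p.1 p.2 y) 2 ℙ
        ≤ ENNReal.ofReal (B / dyadicDist x y) := by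
  classical
  set S : ℝ := ∑' I, ∫ ω, |a I ω| ∂ℙ with hSdef
  have hSnn : 0 ≤ S := tsum_nonneg fun I => integral_nonneg fun ω => abs_nonneg _
  set C : ℝ := S + Real.sqrt (8 * exp (ν / 2)) with hCdef
  have hCnn : 0 ≤ C := by positivity
  refine ⟨2 * C + 1, by positivity, ?_⟩
  intro x y hx hy hxy
  set δ : ℝ := dyadicDist x y with hδdef
  have hδpos : 0 < δ := RHK.dyadicDist_pos hx hy hxy
  -- the weights
  set w : ℤ × ℕ → ℝ≥0∞ :=
    fun p => (‖haarDyadic p.1 p.2 x‖₊ : ℝ≥0∞) * (‖haarDyadic p.1 p.2 y‖₊ : ℝ≥0∞) with hwdef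
  have hW : ∑' p, w p ≤ ENNReal.ofReal (2 / δ) := by
    calc ∑' p, w p
        ≤ ∑' p : ℤ × ℕ, (if x ∈ dyadicInterval p.1 p.2 ∧ y ∈ dyadicInterval p.1 p.2
            then ENNReal.ofReal ((2:ℝ)^p.1) else 0) :=
          ENNReal.tsum_le_tsum fun p => RHK.haar_term_bound x y
      _ = ∑' j : ℤ, ∑' k : ℕ, (if x ∈ dyadicInterval j k ∧ y ∈ dyadicInterval j k
            then ENNReal.ofReal ((2:ℝ)^j) else 0) := ENNReal.tsum_prod'
      _ ≤ ∑' j : ℤ, (if δ ≤ (2:ℝ)^(-j) then ENNReal.ofReal ((2:ℝ)^j) else 0) := by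
          apply ENNReal.tsum_le_tsum
          intro j
          set k₀ : ℕ := ⌊(2:ℝ)^j * x⌋₊ with hk₀
          have huniq : ∀ k : ℕ, x ∈ dyadicInterval j k → k = k₀ := by
            intro k hk
            rw [RHK.mem_dyadicInterval_iff] at hk
            have h0 : (0:ℝ) ≤ (2:ℝ)^j * x := le_trans (Nat.cast_nonneg k) (by linarith [hk.1])
            symm
            rw [hk₀, Nat.floor_eq_iff h0]
            constructor <;> [linarith [hk.1]; linarith [hk.2]]
          rw [tsum_eq_single k₀ (fun k hk => if_neg (fun hc => hk (huniq k hc.1)))]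
          by_cases hc : x ∈ dyadicInterval j k₀ ∧ y ∈ dyadicInterval j k₀
          · rw [if_pos hc, if_pos (RHK.dyadicDist_le hc.1 hc.2)]
          · rw [if_neg hc]; exact zero_le
      _ ≤ ENNReal.ofReal (2 / δ) := RHK.geom_bound δ hδpos
  have hWtop : ∑' p, w p ≠ ⊤ := (hW.trans_lt ENNReal.ofReal_lt_top).ne
  -- per-variable second moment bound
  have hb : ∀ p : ℤ × ℕ, ∫⁻ ω, ((‖a p ω‖₊ : ℝ≥0∞)) ^ (2:ℝ) ∂ℙ ≤
      (ENNReal.ofReal C) ^ (2:ℝ) := by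
    intro p
    have hSp : ∫ ω, |a p ω| ∂ℙ ≤ S :=
      Summable.le_tsum habs p fun J _ => integral_nonneg fun ω => abs_nonneg _
    have h1 := RHK.single_var_bound (a p) ν (hint p) (hmgf p) (hsub p) S hSp
    have h2 : ∫⁻ ω, ((‖a p ω‖₊ : ℝ≥0∞)) ^ (2:ℝ) ∂ℙ = (eLpNorm (a p) 2 ℙ) ^ (2:ℝ) := by
      rw [eLpNorm_eq_lintegral_rpow_enorm_toReal (by norm_num) (by norm_num)]
      simp only [ENNReal.toReal_ofNat, enorm_eq_nnnorm]
      rw [← ENNReal.rpow_mul]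
      norm_num
    rw [h2, hCdef]
    exact ENNReal.rpow_le_rpow h1 (by norm_num)
  -- pointwise bound
  have hpt : ∀ ω : Ω, ((‖∑' p : ℤ × ℕ, a p ω * haarDyadic p.1 p.2 x * haarDyadic p.1 p.2 y‖₊
        : ℝ≥0∞)) ^ (2:ℝ) ≤
      (∑' p, w p) * (∑' p, w p * ((‖a p ω‖₊ : ℝ≥0∞)) ^ (2:ℝ)) := by
    intro ω
    have h1 : ((‖∑' p : ℤ × ℕ, a p ω * haarDyadic p.1 p.2 x * haarDyadic p.1 p.2 y‖₊ : ℝ≥0∞))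
        ≤ ∑' p, w p * (‖a p ω‖₊ : ℝ≥0∞) := by
      refine (RHK.ennnorm_tsum_le _).trans ?_
      apply ENNReal.tsum_le_tsum
      intro p
      rw [nnnorm_mul, nnnorm_mul, ENNReal.coe_mul, ENNReal.coe_mul, hwdef]
      ring_nf
      exact le_refl _
    calc ((‖∑' p : ℤ × ℕ, a p ω * haarDyadic p.1 p.2 x * haarDyadic p.1 p.2 y‖₊ : ℝ≥0∞)) ^ (2:ℝ)
        ≤ (∑' p, w p * (‖a p ω‖₊ : ℝ≥0∞)) ^ (2:ℝ) :=
          ENNReal.rpow_le_rpow h1 (by norm_num)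
      _ ≤ (∑' p, w p) * (∑' p, w p * ((‖a p ω‖₊ : ℝ≥0∞)) ^ (2:ℝ)) :=
          RHK.tsum_cauchy_schwarz w _
  -- main estimate
  have hmain : ∫⁻ ω, ((‖∑' p : ℤ × ℕ, a p ω * haarDyadic p.1 p.2 x * haarDyadic p.1 p.2 y‖₊
      : ℝ≥0∞)) ^ (2:ℝ) ∂ℙ ≤ (ENNReal.ofReal (2 / δ) * ENNReal.ofReal C) ^ (2:ℝ) := by
    calc ∫⁻ ω, ((‖∑' p : ℤ × ℕ, a p ω * haarDyadic p.1 p.2 x * haarDyadic p.1 p.2 y‖₊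
          : ℝ≥0∞)) ^ (2:ℝ) ∂ℙ
        ≤ ∫⁻ ω, (∑' p, w p) * (∑' p, w p * ((‖a p ω‖₊ : ℝ≥0∞)) ^ (2:ℝ)) ∂ℙ :=
          lintegral_mono hpt
      _ = (∑' p, w p) * ∫⁻ ω, (∑' p, w p * ((‖a p ω‖₊ : ℝ≥0∞)) ^ (2:ℝ)) ∂ℙ :=
          lintegral_const_mul' _ _ hWtop
      _ = (∑' p, w p) * ∑' p, ∫⁻ ω, w p * ((‖a p ω‖₊ : ℝ≥0∞)) ^ (2:ℝ) ∂ℙ := by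
          congr 1
          apply lintegral_tsum
          intro p
          apply AEMeasurable.const_mul
          have := (hint p).aestronglyMeasurable.enorm
          simp_rw [RHK.rpow_two_eq]
          exact this.pow_const 2
      _ = (∑' p, w p) * ∑' p, w p * ∫⁻ ω, ((‖a p ω‖₊ : ℝ≥0∞)) ^ (2:ℝ) ∂ℙ := by
          congr 1
          apply tsum_congr
          intro p
          exact lintegral_const_mul' _ _
            (ENNReal.mul_ne_top ENNReal.coe_ne_top ENNReal.coe_ne_top)
      _ ≤ (∑' p, w p) * ∑' p, w p * (ENNReal.ofReal C) ^ (2:ℝ) := by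
          apply mul_le_mul_right
          exact ENNReal.tsum_le_tsum fun p => mul_le_mul_right (hb p) _
      _ = (∑' p, w p) * ((∑' p, w p) * (ENNReal.ofReal C) ^ (2:ℝ)) := by
          rw [ENNReal.tsum_mul_right]
      _ ≤ ENNReal.ofReal (2 / δ) * (ENNReal.ofReal (2 / δ) * (ENNReal.ofReal C) ^ (2:ℝ)) :=
          mul_le_mul' hW (mul_le_mul_left hW _)
      _ = (ENNReal.ofReal (2 / δ) * ENNReal.ofReal C) ^ (2:ℝ) := by
          rw [ENNReal.mul_rpow_of_nonneg _ _ (by norm_num : (0:ℝ) ≤ 2)]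
          rw [RHK.rpow_two_eq, RHK.rpow_two_eq]
          ring
  calc eLpNorm (fun ω =>
        ∑' p : ℤ × ℕ, a p ω * haarDyadic p.1 p.2 x * haarDyadic p.1 p.2 y) 2 ℙ
      = (∫⁻ ω, ((‖∑' p : ℤ × ℕ, a p ω * haarDyadic p.1 p.2 x * haarDyadic p.1 p.2 y‖₊
          : ℝ≥0∞)) ^ (2:ℝ) ∂ℙ) ^ (1/(2:ℝ)) := by
        rw [eLpNorm_eq_lintegral_rpow_enorm_toReal (by norm_num) (by norm_num)]
        simp only [ENNReal.toReal_ofNat, enorm_eq_nnnorm]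
    _ ≤ ((ENNReal.ofReal (2 / δ) * ENNReal.ofReal C) ^ (2:ℝ)) ^ (1/(2:ℝ)) :=
        ENNReal.rpow_le_rpow hmain (by norm_num)
    _ = ENNReal.ofReal (2 / δ) * ENNReal.ofReal C := by
        rw [← ENNReal.rpow_mul]
        norm_num
    _ = ENNReal.ofReal (2 / δ * C) := (ENNReal.ofReal_mul (by positivity)).symm
    _ ≤ ENNReal.ofReal ((2 * C + 1) / δ) := by
        apply ENNReal.ofReal_le_ofReal
        rw [div_mul_eq_mul_div, div_le_div_iff₀ hδpos hδpos]
        nlinarith
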